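/- Let P₂, P₄, P₆ : ℂ² → ℂ be complex differentiable (holomorphic) functions satisfying for all (x,y) ∈ ℂ²: (i) y·∂ₓP₂(x,y) = ∂ₓP₄(x,y); (ii) x·∂_yP₂(x,y) = ∂_yP₆(x,y); (iii) y·∂_yP₂(x,y) + x·∂ₓP₂(x,y) = ∂_yP₄(x,y) + ∂ₓP₆(x,y). Then there exist complex differentiable (entire) functions f, g : ℂ → ℂ such that for all (x,y) ∈ ℂ²: P₂(x,y) = -(g'(x) + f'(y))/2, P₄(x,y) = f(y) - y·(g'(x) + f'(y))/2, and P₆(x,y) = g(x) - x·(g'(x) + f'(y))/2. -/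

import Mathlib

/-- Classification of the holomorphic solutions of the system arising from the
quadratic relation with `P₁ = xy`, `P₃ = x`, `P₅ = y`: every holomorphic solution
`(P₂, P₄, P₆)` on `ℂ²` comes from a pair of entire functions `f, g` via
`P₂ = -(g'(x)+f'(y))/2`, `P₄ = f(y) - y(g'(x)+f'(y))/2`,
`P₆ = g(x) - x(g'(x)+f'(y))/2`. -/
theorem solutions_of_system_classification
    (P₂ P₄ P₆ : ℂ × ℂ → ℂ)
    (hP₂ : Differentiable ℂ P₂) (hP₄ : Differentiable ℂ P₄) (hP₆ : Differentiable ℂ P₆)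
    (h₁ : ∀ x y : ℂ, y * deriv (fun t => P₂ (t, y)) x = deriv (fun t => P₄ (t, y)) x)
    (h₂ : ∀ x y : ℂ, x * deriv (fun t => P₂ (x, t)) y = deriv (fun t => P₆ (x, t)) y)
    (h₃ : ∀ x y : ℂ,
      y * deriv (fun t => P₂ (x, t)) y + x * deriv (fun t => P₂ (t, y)) x =
        deriv (fun t => P₄ (x, t)) y + deriv (fun t => P₆ (t, y)) x) :
    ∃ f g : ℂ → ℂ, Differentiable ℂ f ∧ Differentiable ℂ g ∧
      ∀ x y : ℂ,
        P₂ (x, y) = -(deriv g x + deriv f y) / 2 ∧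
        P₄ (x, y) = f y - y * (deriv g x + deriv f y) / 2 ∧
        P₆ (x, y) = g x - x * (deriv g x + deriv f y) / 2 := by
  -- slice differentiability
  have s2x : ∀ y : ℂ, Differentiable ℂ (fun t => P₂ (t, y)) :=
    fun y => hP₂.comp (differentiable_id.prodMk (differentiable_const y))
  have s2y : ∀ x : ℂ, Differentiable ℂ (fun t => P₂ (x, t)) :=
    fun x => hP₂.comp ((differentiable_const x).prodMk differentiable_id)
  have s4x : ∀ y : ℂ, Differentiable ℂ (fun t => P₄ (t, y)) :=
    fun y => hP₄.comp (differentiable_id.prodMk (differentiable_const y))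
  have s4y : ∀ x : ℂ, Differentiable ℂ (fun t => P₄ (x, t)) :=
    fun x => hP₄.comp ((differentiable_const x).prodMk differentiable_id)
  have s6x : ∀ y : ℂ, Differentiable ℂ (fun t => P₆ (t, y)) :=
    fun y => hP₆.comp (differentiable_id.prodMk (differentiable_const y))
  have s6y : ∀ x : ℂ, Differentiable ℂ (fun t => P₆ (x, t)) :=
    fun x => hP₆.comp ((differentiable_const x).prodMk differentiable_id)
  set f : ℂ → ℂ := fun y => P₄ (0, y) - y * P₂ (0, y) with hf
  set g : ℂ → ℂ := fun x => P₆ (x, 0) - x * P₂ (x, 0) with hg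
  -- P₄ - y P₂ does not depend on x
  have hFconst : ∀ x y : ℂ, P₄ (x, y) - y * P₂ (x, y) = f y := by
    intro x y
    have hd : Differentiable ℂ (fun t => P₄ (t, y) - y * P₂ (t, y)) :=
      (s4x y).sub ((s2x y).const_mul y)
    have hz : ∀ t : ℂ, deriv (fun t => P₄ (t, y) - y * P₂ (t, y)) t = 0 := by
      intro t
      rw [deriv_fun_sub ((s4x y) t) (((s2x y).const_mul y) t), deriv_const_mul y ((s2x y) t)]
      rw [← h₁ t y]; ring
    exact is_const_of_deriv_eq_zero hd hz x 0
  -- P₆ - x P₂ does not depend on y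
  have hGconst : ∀ x y : ℂ, P₆ (x, y) - x * P₂ (x, y) = g x := by
    intro x y
    have hd : Differentiable ℂ (fun t => P₆ (x, t) - x * P₂ (x, t)) :=
      (s6y x).sub ((s2y x).const_mul x)
    have hz : ∀ t : ℂ, deriv (fun t => P₆ (x, t) - x * P₂ (x, t)) t = 0 := by
      intro t
      rw [deriv_fun_sub ((s6y x) t) (((s2y x).const_mul x) t), deriv_const_mul x ((s2y x) t)]
      rw [← h₂ x t]; ring
    exact is_const_of_deriv_eq_zero hd hz y 0
  have hfdiff : Differentiable ℂ f :=
    (s4y 0).sub (differentiable_id.mul (s2y 0))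
  have hgdiff : Differentiable ℂ g :=
    (s6x 0).sub (differentiable_id.mul (s2x 0))
  -- derivative of f computed at any x
  have hf' : ∀ x y : ℂ, deriv f y =
      deriv (fun t => P₄ (x, t)) y - P₂ (x, y) - y * deriv (fun t => P₂ (x, t)) y := by
    intro x y
    have hfun : f = fun t => P₄ (x, t) - t * P₂ (x, t) := by
      funext t; exact (hFconst x t).symm
    have h4 : HasDerivAt (fun t => P₄ (x, t)) (deriv (fun t => P₄ (x, t)) y) y :=
      ((s4y x) y).hasDerivAt
    have h2' : HasDerivAt (fun t => P₂ (x, t)) (deriv (fun t => P₂ (x, t)) y) y :=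
      ((s2y x) y).hasDerivAt
    have hmul : HasDerivAt (fun t : ℂ => t * P₂ (x, t))
        (1 * P₂ (x, y) + y * deriv (fun t => P₂ (x, t)) y) y :=
      (hasDerivAt_id y).mul h2'
    have := (h4.fun_sub hmul).deriv
    rw [hfun, this]; ring
  have hg' : ∀ x y : ℂ, deriv g x =
      deriv (fun t => P₆ (t, y)) x - P₂ (x, y) - x * deriv (fun t => P₂ (t, y)) x := by
    intro x y
    have hfun : g = fun t => P₆ (t, y) - t * P₂ (t, y) := by
      funext t; exact (hGconst t y).symm
    have h6 : HasDerivAt (fun t => P₆ (t, y)) (deriv (fun t => P₆ (t, y)) x) x :=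
      ((s6x y) x).hasDerivAt
    have h2' : HasDerivAt (fun t => P₂ (t, y)) (deriv (fun t => P₂ (t, y)) x) x :=
      ((s2x y) x).hasDerivAt
    have hmul : HasDerivAt (fun t : ℂ => t * P₂ (t, y))
        (1 * P₂ (x, y) + x * deriv (fun t => P₂ (t, y)) x) x :=
      (hasDerivAt_id x).mul h2'
    have := (h6.fun_sub hmul).deriv
    rw [hfun, this]; ring
  refine ⟨f, g, hfdiff, hgdiff, fun x y => ?_⟩
  have key : deriv g x + deriv f y = -2 * P₂ (x, y) := by
    rw [hg' x y, hf' x y]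
    linear_combination -(h₃ x y)
  refine ⟨by rw [key]; ring, ?_, ?_⟩
  · have := hFconst x y
    rw [key]; linear_combination this
  · have := hGconst x y
    rw [key]; linear_combination this
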